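/- Finite zero-sum game minimax (used for the ordinal Byzantine secretary): for finite sets A, B and payoff K : A × B → ℝ, the maximin over mixed strategies equals the minimax over mixed strategies: max over distributions a on A of min over distributions b on B of E[K] equals min over b of max over a of E[K]. -/

import Mathlib

open Finset


/-- Theorem of the alternative via separating hyperplane. -/
theorem mm_alternative {A B : Type*} [Fintype A] [Fintype B] [Nonempty A] [Nonempty B]
    (K : A → B → ℝ)
    (h : ¬ ∃ q ∈ stdSimplex ℝ B, ∀ x, ∑ y, q y * K x y ≤ 0) :
    ∃ p ∈ stdSimplex ℝ A, ∀ y, 0 < ∑ x, p x * K x y := by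
  classical
  set L : (B → ℝ) →ₗ[ℝ] (A → ℝ) :=
    { toFun := fun q x => ∑ y, q y * K x y
      map_add' := by
        intro q r; funext x; simp [add_mul, Finset.sum_add_distrib]
      map_smul' := by
        intro c q; funext x; simp [Finset.mul_sum, mul_assoc] } with hL
  have hLc : Continuous L := L.continuous_of_finiteDimensional
  set C : Set (A → ℝ) := L '' stdSimplex ℝ B with hC
  set N : Set (A → ℝ) := {z | ∀ x, z x ≤ 0} with hN
  have hCconv : Convex ℝ C := (convex_stdSimplex ℝ B).linear_image L
  have hCcomp : IsCompact C := (isCompact_stdSimplex ℝ B).image hLc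
  have hNconv : Convex ℝ N := by
    intro z hz w hw a b ha hb hab x
    have := add_nonpos (mul_nonpos_of_nonneg_of_nonpos ha (hz x))
      (mul_nonpos_of_nonneg_of_nonpos hb (hw x))
    simpa using this
  have hNclosed : IsClosed N := by
    have : N = ⋂ x, {z : A → ℝ | z x ≤ 0} := by
      ext z; simp [hN, Set.mem_iInter]
    rw [this]
    exact isClosed_iInter fun x => isClosed_le (continuous_apply x) continuous_const
  have hdisj : Disjoint N C := by
    rw [Set.disjoint_right]
    rintro z ⟨q, hq, rfl⟩ hz
    exact h ⟨q, hq, fun x => hz x⟩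
  obtain ⟨f, u, v, hfu, huv, hfv⟩ :=
    geometric_hahn_banach_closed_compact hNconv hNclosed hCconv hCcomp hdisj
  have h0 : (0 : ℝ) < u := by simpa using hfu 0 (fun x => le_rfl)
  -- coefficients of f
  set c : A → ℝ := fun x => f (Pi.single x 1) with hc
  have hcnn : ∀ x, 0 ≤ c x := by
    intro x
    by_contra hneg
    push_neg at hneg
    set t : ℝ := (u + 1) / (-(c x)) with ht
    have htpos : 0 ≤ t := by
      apply div_nonneg <;> linarith
    have hmem : (-t) • (Pi.single x 1 : A → ℝ) ∈ N := by
      intro x'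
      by_cases hx : x' = x
      · subst hx; simp [neg_nonpos, htpos]
      · simp [Pi.single_apply, hx]
    have := hfu _ hmem
    rw [map_smul] at this
    simp only [smul_eq_mul, ← hc] at this
    have hne : c x ≠ 0 := ne_of_lt hneg
    have : -t * c x = u + 1 := by
      rw [ht, div_neg, neg_neg, div_mul_cancel₀ _ hne]
    linarith [hfu _ hmem, (by rw [map_smul, smul_eq_mul]; exact this : f ((-t) • (Pi.single x 1 : A → ℝ)) = u + 1)]
  have hfz : ∀ z : A → ℝ, f z = ∑ x, z x * c x := by
    intro z
    have hz : z = ∑ x, z x • (Pi.single x 1 : A → ℝ) := by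
      funext x'
      simp [Pi.single_apply, Finset.sum_apply]
    conv_lhs => rw [hz]
    rw [map_sum]
    simp [hc]
  -- evaluate f on L (Pi.single y 1)
  have hLy : ∀ y, L (Pi.single y 1) = fun x => K x y := by
    intro y; funext x
    simp [hL, Pi.single_apply]
  have hvy : ∀ y, v < ∑ x, K x y * c x := by
    intro y
    have := hfv _ ⟨Pi.single y 1, single_mem_stdSimplex ℝ y, rfl⟩
    rwa [hfz, hLy] at this
  set S : ℝ := ∑ x, c x with hS
  have hSpos : 0 < S := by
    rcases lt_or_eq_of_le (Finset.sum_nonneg fun x _ => hcnn x) with hp | hp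
    · exact hp
    · exfalso
      have hall : ∀ x, c x = 0 := by
        intro x
        have := (Finset.sum_eq_zero_iff_of_nonneg (fun x _ => hcnn x)).1 hp.symm
        exact this x (mem_univ x)
      obtain y := Classical.arbitrary B
      have := hvy y
      simp [hall] at this
      linarith [h0, huv]
  refine ⟨fun x => c x / S, ⟨fun x => div_nonneg (hcnn x) hSpos.le, ?_⟩, ?_⟩
  · rw [← Finset.sum_div]
    field_simp
    exact hS.symm
  · intro y
    have := hvy y
    have h2 : ∑ x, c x / S * K x y = (∑ x, K x y * c x) / S := by
      rw [Finset.sum_div]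
      congr 1; funext x; ring
    rw [h2]
    have : (0:ℝ) < ∑ x, K x y * c x := lt_trans (lt_trans h0 huv) this
    positivity

/-- Von Neumann's minimax theorem for finite zero-sum games, in saddle-point form:
for finite nonempty `A`, `B` and payoff `K`, there exist mixed strategies `p`, `q`
(points of the standard simplex) such that `p` is a best response to `q` and `q` to
`p`; hence `max_p min_q E[K] = min_q max_p E[K]`, with both optima attained. -/
theorem stmt_18 {A B : Type*} [Fintype A] [Fintype B] [Nonempty A] [Nonempty B]
    (K : A → B → ℝ) :
    ∃ p ∈ stdSimplex ℝ A, ∃ q ∈ stdSimplex ℝ B,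
      (∀ q' ∈ stdSimplex ℝ B,
        ∑ x : A, ∑ y : B, p x * q y * K x y ≤ ∑ x : A, ∑ y : B, p x * q' y * K x y) ∧
      (∀ p' ∈ stdSimplex ℝ A,
        ∑ x : A, ∑ y : B, p' x * q y * K x y ≤ ∑ x : A, ∑ y : B, p x * q y * K x y) := by
  classical
  have hAne : (univ : Finset A).Nonempty := univ_nonempty
  have hBne : (univ : Finset B).Nonempty := univ_nonempty
  set g : (B → ℝ) → ℝ := fun q => univ.sup' hAne (fun x => ∑ y, q y * K x y) with hg
  set φ : (A → ℝ) → ℝ := fun p => univ.inf' hBne (fun y => ∑ x, p x * K x y) with hφ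
  have hgc : Continuous g :=
    Continuous.finset_sup'_apply hAne fun x _ =>
      continuous_finset_sum univ fun y _ => (continuous_apply y).mul continuous_const
  have hφc : Continuous φ :=
    Continuous.finset_inf'_apply hBne fun y _ =>
      continuous_finset_sum univ fun x _ => (continuous_apply x).mul continuous_const
  obtain ⟨q0, hq0, hq0min⟩ := (isCompact_stdSimplex ℝ B).exists_isMinOn
    ⟨_, single_mem_stdSimplex ℝ (Classical.arbitrary B)⟩ hgc.continuousOn
  obtain ⟨p0, hp0, hp0max⟩ := (isCompact_stdSimplex ℝ A).exists_isMaxOn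
    ⟨_, single_mem_stdSimplex ℝ (Classical.arbitrary A)⟩ hφc.continuousOn
  set v : ℝ := g q0 with hv
  -- key step: v ≤ φ p0
  have key : v ≤ φ p0 := by
    by_contra hlt
    push_neg at hlt
    set c : ℝ := φ p0 with hcdef
    have hnot : ¬ ∃ q ∈ stdSimplex ℝ B, ∀ x, ∑ y, q y * (K x y - c) ≤ 0 := by
      rintro ⟨q, hq, hle⟩
      have hgq : g q ≤ c := by
        rw [hg]
        apply Finset.sup'_le
        intro x _
        have h1 := hle x
        have hsum : ∑ y, q y * (K x y - c) = (∑ y, q y * K x y) - (∑ y, q y) * c := by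
          rw [Finset.sum_mul, ← Finset.sum_sub_distrib]
          congr 1 with y
          ring
        rw [hsum, hq.2, one_mul] at h1
        linarith
      have h2 : v ≤ g q := hq0min hq
      linarith
    obtain ⟨p, hp, hppos⟩ := mm_alternative (fun x y => K x y - c) hnot
    have hφp : c < φ p := by
        rw [hφ, Finset.lt_inf'_iff]
        intro y _
        have h1 := hppos y
        have hsum : ∑ x, p x * (K x y - c) = (∑ x, p x * K x y) - (∑ x, p x) * c := by
          rw [Finset.sum_mul, ← Finset.sum_sub_distrib]
          congr 1 with x
          ring
        rw [hsum, hp.2, one_mul] at h1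
        linarith
    exact absurd (hp0max hp : φ p ≤ c) (not_le.mpr hφp)
  -- consequences
  have F1 : ∀ y, v ≤ ∑ x, p0 x * K x y := fun y =>
    key.trans (Finset.inf'_le _ (mem_univ y))
  have F2 : ∀ x, ∑ y, q0 y * K x y ≤ v :=
    fun x => Finset.le_sup' (fun x => ∑ y, q0 y * K x y) (mem_univ x)
  have swap1 : ∀ (p : A → ℝ) (q : B → ℝ),
      ∑ x : A, ∑ y : B, p x * q y * K x y = ∑ y, q y * ∑ x, p x * K x y := by
    intro p q
    rw [Finset.sum_comm]
    congr 1 with y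
    rw [Finset.mul_sum]
    congr 1 with x
    ring
  have swap2 : ∀ (p : A → ℝ) (q : B → ℝ),
      ∑ x : A, ∑ y : B, p x * q y * K x y = ∑ x, p x * ∑ y, q y * K x y := by
    intro p q
    congr 1 with x
    rw [Finset.mul_sum]
    congr 1 with y
    ring
  have lower : ∀ q' ∈ stdSimplex ℝ B, v ≤ ∑ x : A, ∑ y : B, p0 x * q' y * K x y := by
    intro q' hq'
    rw [swap1]
    calc v = ∑ y, q' y * v := by rw [← Finset.sum_mul, hq'.2, one_mul]
    _ ≤ ∑ y, q' y * ∑ x, p0 x * K x y :=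
        Finset.sum_le_sum fun y _ => mul_le_mul_of_nonneg_left (F1 y) (hq'.1 y)
  have upper : ∀ p' ∈ stdSimplex ℝ A, ∑ x : A, ∑ y : B, p' x * q0 y * K x y ≤ v := by
    intro p' hp'
    rw [swap2]
    calc ∑ x, p' x * ∑ y, q0 y * K x y ≤ ∑ x, p' x * v :=
        Finset.sum_le_sum fun x _ => mul_le_mul_of_nonneg_left (F2 x) (hp'.1 x)
    _ = v := by rw [← Finset.sum_mul, hp'.2, one_mul]
  have hval : ∑ x : A, ∑ y : B, p0 x * q0 y * K x y = v :=
    le_antisymm (upper p0 hp0) (lower q0 hq0)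
  exact ⟨p0, hp0, q0, hq0, fun q' hq' => hval ▸ lower q' hq',
    fun p' hp' => hval ▸ upper p' hp'⟩
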